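/- Let q ∈ ℂ with q ≠ 0, and let Z = diag(z_1, …, z_n) be a diagonal n×n complex matrix whose entries are pairwise distinct and satisfy z_i · z_{n+1−i} = q for all 1 ≤ i ≤ n. Then an invertible n×n complex matrix V satisfies q·(Zᵀ)^{−1} = V^{−1}·Z·V if and only if V is skew-diagonal with all of its anti-diagonal entries V_{i,n+1−i} nonzero. -/
import Mathlib


open Matrix

/-- let `q ≠ 0` and `Z = diag(z_1, …, z_n)` with pairwise distinct
entries satisfying `z_i·z_{n+1−i} = q`. Then an invertible `V` satisfies
`q·(Zᵀ)⁻¹ = V⁻¹·Z·V` iff `V` is skew-diagonal (entry `(i,j)` vanishes whenever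
`i + j ≠ n + 1`, i.e. `j ≠ rev i`) with all anti-diagonal entries nonzero. -/
theorem conj_eq_iff_skewDiagonal (n : ℕ) (q : ℂ) (hq : q ≠ 0)
    (z : Fin n → ℂ) (hdist : Function.Injective z)
    (hz : ∀ i : Fin n, z i * z i.rev = q)
    (V : Matrix (Fin n) (Fin n) ℂ) (hV : IsUnit V) :
    q • ((Matrix.diagonal z)ᵀ)⁻¹ = V⁻¹ * Matrix.diagonal z * V ↔
      ((∀ i j : Fin n, j ≠ i.rev → V i j = 0) ∧ ∀ i : Fin n, V i i.rev ≠ 0) := by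
  letI := hV.invertible
  have hkey : q • ((Matrix.diagonal z)ᵀ)⁻¹ = Matrix.diagonal (fun i => z i.rev) := by
    rw [diagonal_transpose]
    have hinv : (Matrix.diagonal z)⁻¹ = Matrix.diagonal (fun i => q⁻¹ * z i.rev) := by
      apply Matrix.inv_eq_right_inv
      rw [diagonal_mul_diagonal]
      have h1 : ∀ i : Fin n, z i * (q⁻¹ * z i.rev) = 1 := fun i => by
        rw [mul_left_comm, hz i, inv_mul_cancel₀ hq]
      simp [h1]
    rw [hinv]
    ext i j
    by_cases h : i = j <;> simp [h, Matrix.diagonal, mul_inv_cancel_left₀ hq]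
  rw [hkey]
  have hiff : Matrix.diagonal (fun i => z i.rev) = V⁻¹ * Matrix.diagonal z * V ↔
      V * Matrix.diagonal (fun i => z i.rev) = Matrix.diagonal z * V := by
    constructor
    · intro h
      rw [h, ← Matrix.mul_assoc, ← Matrix.mul_assoc, Matrix.mul_inv_of_invertible, Matrix.one_mul]
    · intro h
      rw [Matrix.mul_assoc, ← h, ← Matrix.mul_assoc, Matrix.inv_mul_of_invertible, Matrix.one_mul]
  rw [hiff]
  have hent : V * Matrix.diagonal (fun i => z i.rev) = Matrix.diagonal z * V ↔
      ∀ i j : Fin n, V i j * z j.rev = z i * V i j := by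
    constructor
    · intro h i j
      have := congrFun (congrFun h i) j
      simpa [Matrix.mul_diagonal, Matrix.diagonal_mul] using this
    · intro h
      ext i j
      simp [Matrix.mul_diagonal, Matrix.diagonal_mul, h i j]
  rw [hent]
  constructor
  · intro h
    have hskew : ∀ i j : Fin n, j ≠ i.rev → V i j = 0 := by
      intro i j hne
      have hzz : z j.rev ≠ z i := fun hc => hne (by
        have := hdist hc
        rw [← this, Fin.rev_rev])
      have := h i j
      have : V i j * (z j.rev - z i) = 0 := by ring_nf; linear_combination this
      rcases mul_eq_zero.mp this with h0 | h0
      · exact h0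
      · exact absurd (sub_eq_zero.mp h0) hzz
    refine ⟨hskew, fun i hzero => ?_⟩
    have hrow : ∀ j, V i j = 0 := by
      intro j
      by_cases hj : j = i.rev
      · rw [hj]; exact hzero
      · exact hskew i j hj
    have h1 : V * V⁻¹ = 1 := Matrix.mul_inv_of_invertible V
    have := congrFun (congrFun h1 i) i
    rw [Matrix.one_apply_eq] at this
    rw [Matrix.mul_apply] at this
    simp [hrow] at this
  · rintro ⟨hskew, hnz⟩ i j
    by_cases hj : j = i.rev
    · subst hj
      rw [Fin.rev_rev, mul_comm]
    · rw [hskew i j hj, zero_mul, mul_zero]
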